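/- The spectral radius of R̄ − 1_n π^T, i.e., the maximum modulus among the complex eigenvalues of R̄ − 1_n π^T, is strictly less than 1. -/

import Mathlib

open Matrix Filter
open scoped Kronecker

noncomputable section

/-- Euclidean norm on `ι → ℝ`. -/
def eucNorm {ι : Type*} [Fintype ι] (z : ι → ℝ) : ℝ := Real.sqrt (∑ i, z i ^ 2)

/-- Spectral norm (operator 2-norm) of a square real matrix. -/
def specNorm {ι : Type*} [Fintype ι] (A : Matrix ι ι ℝ) : ℝ :=
  sSup {c : ℝ | ∃ z : ι → ℝ, eucNorm z ≤ 1 ∧ c = eucNorm (A.mulVec z)}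

/-- Matrix norm induced by a vector norm `N`: `sup_{z ≠ 0} N (A z) / N z`. -/
def opNorm {ι : Type*} [Fintype ι] (N : (ι → ℝ) → ℝ) (A : Matrix ι ι ℝ) : ℝ :=
  sSup {c : ℝ | ∃ z : ι → ℝ, z ≠ 0 ∧ c = N (A.mulVec z) / N z}

/-- `g` is the gradient of `f : ℝ^p → ℝ`. -/
def IsGradient {p : ℕ} (f : (Fin p → ℝ) → ℝ) (g : (Fin p → ℝ) → Fin p → ℝ) : Prop :=
  ∀ x, HasFDerivAt f (∑ j, g x j • (ContinuousLinearMap.proj j : (Fin p → ℝ) →L[ℝ] ℝ)) x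

/-- `R = R̄ ⊗ I_p`. -/
def RK (n p : ℕ) (Rb : Matrix (Fin n) (Fin n) ℝ) :
    Matrix (Fin n × Fin p) (Fin n × Fin p) ℝ :=
  Rb ⊗ₖ (1 : Matrix (Fin p) (Fin p) ℝ)

/-- `V_∞ = (1_n π^T) ⊗ I_p`. -/
def VinfK (n p : ℕ) (π : Fin n → ℝ) :
    Matrix (Fin n × Fin p) (Fin n × Fin p) ℝ :=
  (Matrix.of (fun _ j => π j) : Matrix (Fin n) (Fin n) ℝ) ⊗ₖ (1 : Matrix (Fin p) (Fin p) ℝ)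

/-- `V(k) = R̄^k ⊗ I_p`. -/
def VK (n p : ℕ) (Rb : Matrix (Fin n) (Fin n) ℝ) (k : ℕ) :
    Matrix (Fin n × Fin p) (Fin n × Fin p) ℝ :=
  (Rb ^ k) ⊗ₖ (1 : Matrix (Fin p) (Fin p) ℝ)

/-- `Ṽ(k)⁻¹ = diag(((R̄^k)_{11})⁻¹, …, ((R̄^k)_{nn})⁻¹) ⊗ I_p`. -/
def VtinvK (n p : ℕ) (Rb : Matrix (Fin n) (Fin n) ℝ) (k : ℕ) :
    Matrix (Fin n × Fin p) (Fin n × Fin p) ℝ :=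
  Matrix.diagonal (fun q => ((Rb ^ k) q.1 q.1)⁻¹)

/-- `∇f(z) = (∇f_1(z_1), …, ∇f_n(z_n))` block-wise. -/
def gradf {n p : ℕ} (g : Fin n → (Fin p → ℝ) → Fin p → ℝ) (z : Fin n × Fin p → ℝ) :
    Fin n × Fin p → ℝ :=
  fun q => g q.1 (fun j => z (q.1, j)) q.2

/-- `x*_vec = 1_n ⊗ x*`. -/
def starVec (n p : ℕ) (xstar : Fin p → ℝ) : Fin n × Fin p → ℝ := fun q => xstar q.2

end

/-- every complex eigenvalue of `R̄ − 1_n π^T` has modulus `< 1`,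
i.e. the spectral radius of `R̄ − 1_n π^T` is strictly less than 1. -/
theorem stmt1 (n : ℕ) (hn : 1 ≤ n) (Rb : Matrix (Fin n) (Fin n) ℝ)
    (hnonneg : ∀ i j, 0 ≤ Rb i j) (hrow : ∀ i, ∑ j, Rb i j = 1)
    (hdiag : ∀ i, 0 < Rb i i)
    (hirr : ∀ i j, ∃ k : ℕ, 0 < (Rb ^ k) i j)
    (π : Fin n → ℝ) (hπpos : ∀ i, 0 < π i) (hπsum : ∑ i, π i = 1)
    (hπstat : Matrix.vecMul π Rb = π) :
    ∀ lam : ℂ,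
      (∃ v : Fin n → ℂ, v ≠ 0 ∧
          ((Rb - (Matrix.of (fun _ j => π j) : Matrix (Fin n) (Fin n) ℝ)).map
              (Complex.ofReal ·)).mulVec v = lam • v) →
        ‖lam‖ < 1 := by
  intro lam ⟨v, hv, heig⟩
  by_contra hcon
  push_neg at hcon
  have hlam0 : lam ≠ 0 := by
    intro h
    rw [h] at hcon
    simp at hcon
    linarith
  -- componentwise eigen equation
  have heq : ∀ i, ∑ j, ((Rb i j : ℂ) - (π j : ℂ)) * v j = lam * v i := by
    intro i
    have h := congrFun heig i
    simpa [Matrix.mulVec, dotProduct, Matrix.map_apply, Matrix.sub_apply,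
      Pi.smul_apply, smul_eq_mul] using h
  have hstat : ∀ j, ∑ i, (π i : ℂ) * (Rb i j : ℂ) = (π j : ℂ) := by
    intro j
    have h := congrFun hπstat j
    simp only [Matrix.vecMul, dotProduct] at h
    exact_mod_cast congrArg (fun x : ℝ => (x : ℂ)) h
  have hπsumC : ∑ i, (π i : ℂ) = 1 := by exact_mod_cast hπsum
  -- π · v = 0
  have hS : ∑ j, (π j : ℂ) * v j = 0 := by
    have h1 : ∑ i, (π i : ℂ) * (∑ j, ((Rb i j : ℂ) - (π j : ℂ)) * v j)
        = lam * ∑ i, (π i : ℂ) * v i := by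
      rw [Finset.mul_sum]
      refine Finset.sum_congr rfl fun i _ => ?_
      rw [heq i]; ring
    have h2 : ∑ i, (π i : ℂ) * (∑ j, ((Rb i j : ℂ) - (π j : ℂ)) * v j) = 0 := by
      simp_rw [Finset.mul_sum]
      rw [Finset.sum_comm]
      refine Finset.sum_eq_zero fun j _ => ?_
      have h3 : ∀ i ∈ Finset.univ, (π i : ℂ) * (((Rb i j : ℂ) - (π j : ℂ)) * v j)
          = ((π i : ℂ) * (Rb i j : ℂ)) * v j - (π i : ℂ) * ((π j : ℂ) * v j) := by
        intro i _; ring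
      rw [Finset.sum_congr rfl h3, Finset.sum_sub_distrib, ← Finset.sum_mul,
        ← Finset.sum_mul, hstat j, hπsumC]
      ring
    rw [h2] at h1
    exact (mul_eq_zero.mp h1.symm).resolve_left hlam0
  -- hence Rb v = lam v
  have hRv : ∀ i, ∑ j, (Rb i j : ℂ) * v j = lam * v i := by
    intro i
    have h := heq i
    have h2 : ∑ j, ((Rb i j : ℂ) - (π j : ℂ)) * v j
        = ∑ j, (Rb i j : ℂ) * v j - ∑ j, (π j : ℂ) * v j := by
      rw [← Finset.sum_sub_distrib]
      exact Finset.sum_congr rfl fun j _ => by ring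
    rw [h2, hS, sub_zero] at h
    exact h
  -- choose a coordinate of maximal modulus
  haveI : NeZero n := ⟨by omega⟩
  obtain ⟨i0, -, hi0⟩ := Finset.exists_max_image Finset.univ
    (fun i => ‖v i‖) Finset.univ_nonempty
  set m := ‖v i0‖ with hm
  have hmax : ∀ i, ‖v i‖ ≤ m := fun i => hi0 i (Finset.mem_univ i)
  have hmpos : 0 < m := by
    obtain ⟨i, hi⟩ := Function.ne_iff.mp hv
    exact lt_of_lt_of_le (norm_pos_iff.mpr hi) (hmax i)
  -- |lam| ≤ 1
  have habs_le : ‖lam‖ ≤ 1 := by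
    have h1 : ‖lam‖ * m = ‖∑ j, (Rb i0 j : ℂ) * v j‖ := by
      rw [hRv i0, norm_mul]
    have h2 : ‖∑ j, (Rb i0 j : ℂ) * v j‖ ≤ ∑ j, Rb i0 j * ‖v j‖ := by
      refine (norm_sum_le _ _).trans (le_of_eq (Finset.sum_congr rfl fun j _ => ?_))
      rw [norm_mul, Complex.norm_real, Real.norm_of_nonneg (hnonneg i0 j)]
    have h3 : ∑ j, Rb i0 j * ‖v j‖ ≤ ∑ j, Rb i0 j * m :=
      Finset.sum_le_sum fun j _ => mul_le_mul_of_nonneg_left (hmax j) (hnonneg i0 j)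
    have h4 : ∑ j, Rb i0 j * m = m := by rw [← Finset.sum_mul, hrow i0, one_mul]
    have : ‖lam‖ * m ≤ m := by
      rw [h1]; exact h2.trans (h3.trans_eq h4)
    nlinarith
  have habs1 : ‖lam‖ = 1 := le_antisymm habs_le hcon
  -- the equality / rigidity lemma
  have key : ∀ i, ‖v i‖ = m → ∀ j, 0 < Rb i j → v j = lam * v i := by
    intro i hi j hj
    have hni : Complex.normSq (lam * v i) = m ^ 2 := by
      rw [Complex.normSq_mul, ← Complex.sq_norm, ← Complex.sq_norm, habs1, hi]
      ring
    have hre : ∑ j, Rb i j * ((v j) * (starRingEnd ℂ) (lam * v i)).re = m ^ 2 := by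
      have h1 : ((∑ j, (Rb i j : ℂ) * v j) * (starRingEnd ℂ) (lam * v i)).re
          = Complex.normSq (lam * v i) := by
        rw [hRv i, Complex.mul_conj]
        simp
      rw [hni] at h1
      rw [← h1, Finset.sum_mul, Complex.re_sum]
      refine Finset.sum_congr rfl fun k _ => ?_
      rw [mul_assoc, Complex.re_ofReal_mul]
    have hbound : ∀ k, ((v k) * (starRingEnd ℂ) (lam * v i)).re ≤ m ^ 2 := by
      intro k
      calc ((v k) * (starRingEnd ℂ) (lam * v i)).re
          ≤ ‖(v k) * (starRingEnd ℂ) (lam * v i)‖ := Complex.re_le_norm _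
        _ = ‖v k‖ * ‖lam * v i‖ := by
            rw [norm_mul, Complex.norm_conj]
        _ = ‖v k‖ * m := by rw [norm_mul, habs1, hi, one_mul]
        _ ≤ m * m := mul_le_mul_of_nonneg_right (hmax k) hmpos.le
        _ = m ^ 2 := by ring
    have hzero : ∀ k ∈ Finset.univ,
        Rb i k * (m ^ 2 - ((v k) * (starRingEnd ℂ) (lam * v i)).re) = 0 := by
      have hsum0 : ∑ k, Rb i k * (m ^ 2 - ((v k) * (starRingEnd ℂ) (lam * v i)).re) = 0 := by
        simp_rw [mul_sub]
        rw [Finset.sum_sub_distrib, hre, ← Finset.sum_mul, hrow i, one_mul, sub_self]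
      exact fun k _ => (Finset.sum_eq_zero_iff_of_nonneg (fun k _ =>
        mul_nonneg (hnonneg i k) (sub_nonneg.mpr (hbound k)))).mp hsum0 k (Finset.mem_univ k)
    have hje : ((v j) * (starRingEnd ℂ) (lam * v i)).re = m ^ 2 := by
      have := hzero j (Finset.mem_univ j)
      rcases mul_eq_zero.mp this with h | h
      · exact absurd h hj.ne'
      · linarith [sub_eq_zero.mp h]
    have hns : Complex.normSq (v j - lam * v i) ≤ 0 := by
      have hexp : Complex.normSq (v j - lam * v i)
          = Complex.normSq (v j) + Complex.normSq (lam * v i)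
            - 2 * ((v j) * (starRingEnd ℂ) (lam * v i)).re := Complex.normSq_sub _ _
      have hvj : Complex.normSq (v j) ≤ m ^ 2 := by
        rw [← Complex.sq_norm]
        have := hmax j
        nlinarith [norm_nonneg (v j)]
      rw [hexp, hni, hje]
      linarith
    have := le_antisymm hns (Complex.normSq_nonneg _)
    rwa [Complex.normSq_eq_zero, sub_eq_zero] at this
  -- lam = 1
  have hvi0 : v i0 ≠ 0 := by
    intro h
    rw [hm, h] at hmpos
    simp at hmpos
  have hlam1 : lam = 1 := by
    have := key i0 rfl i0 (hdiag i0)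
    have h2 : (lam - 1) * v i0 = 0 := by rw [sub_mul, one_mul, ← this, sub_self]
    rcases mul_eq_zero.mp h2 with h | h
    · exact sub_eq_zero.mp h
    · exact absurd h hvi0
  have key' : ∀ i, ‖v i‖ = m → ∀ j, 0 < Rb i j → v j = v i := by
    intro i hi j hj
    rw [key i hi j hj, hlam1, one_mul]
  -- powers have nonneg entries
  have hpow : ∀ k : ℕ, ∀ i j, 0 ≤ (Rb ^ k) i j := by
    intro k
    induction k with
    | zero =>
        intro i j
        rw [pow_zero]
        by_cases h : i = j
        · rw [h, Matrix.one_apply_eq]; exact zero_le_one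
        · rw [Matrix.one_apply_ne h]
    | succ k ih =>
        intro i j
        rw [pow_succ, Matrix.mul_apply]
        exact Finset.sum_nonneg fun l _ => mul_nonneg (ih i l) (hnonneg l j)
  -- propagation along the graph
  have hprop : ∀ k : ℕ, ∀ j, 0 < (Rb ^ k) i0 j → v j = v i0 := by
    intro k
    induction k with
    | zero =>
        intro j hj
        rw [pow_zero] at hj
        by_cases h : i0 = j
        · rw [h]
        · rw [Matrix.one_apply_ne h] at hj
          exact absurd hj (lt_irrefl 0)
    | succ k ih =>
        intro j hj
        rw [pow_succ, Matrix.mul_apply] at hj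
        obtain ⟨l, -, hl⟩ := Finset.exists_lt_of_sum_lt (by simpa using hj :
          ∑ l : Fin n, (0 : ℝ) < ∑ l, (Rb ^ k) i0 l * Rb l j)
        have ha : 0 < (Rb ^ k) i0 l := by
          rcases (hpow k i0 l).lt_or_eq with h | h
          · exact h
          · rw [← h, zero_mul] at hl; exact absurd hl (lt_irrefl 0)
        have hb : 0 < Rb l j := by
          rcases (hnonneg l j).lt_or_eq with h | h
          · exact h
          · rw [← h, mul_zero] at hl; exact absurd hl (lt_irrefl 0)
        have hvl : v l = v i0 := ih l ha
        have : ‖v l‖ = m := by rw [hvl]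
        rw [key' l this j hb, hvl]
  -- v is constant, contradicting π · v = 0
  have hconst : ∀ j, v j = v i0 := by
    intro j
    obtain ⟨k, hk⟩ := hirr i0 j
    exact hprop k j hk
  have : ∑ j, (π j : ℂ) * v j = v i0 := by
    calc ∑ j, (π j : ℂ) * v j = ∑ j, (π j : ℂ) * v i0 := by
          refine Finset.sum_congr rfl fun j _ => by rw [hconst j]
      _ = (∑ j, (π j : ℂ)) * v i0 := by rw [Finset.sum_mul]
      _ = v i0 := by rw [hπsumC, one_mul]
  rw [hS] at this
  exact hvi0 this.symm
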